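/- Let A ⊆ ℝ³ be a union of planes each making a 45° angle with every horizontal plane {y = h} (planes with normal vector whose y-component has absolute value equal to 1/√2 times its norm), let A_δ = A + ((−δ,δ) × {0} × (−δ,δ)) (Minkowski sum), and define f_δ(h) = λ₂(A_δ ∩ ([−N,N] × {h} × [−N,N])) for h ∈ [0,1], where λ₂ is two-dimensional Lebesgue measure. Then for all δ, t > 0 and h₁, h₂ ∈ [0,1] with |h₁ − h₂| < t, one has f_{δ+t}(h₁) ≥ f_δ(h₂). -/
import Mathlib

open MeasureTheory Pointwise ENNReal

/-- If A ⊆ ℝ³ is a union of planes each making a 45° angle with the horizontal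
planes {y = h} (the y-component of the normal has absolute value ‖n‖/√2),
A_δ = A + (−δ,δ)×{0}×(−δ,δ), and f_δ(h) is the planar measure of
A_δ ∩ ([−N,N]×{h}×[−N,N]), then |h₁ − h₂| < t implies f_{δ+t}(h₁) ≥ f_δ(h₂). -/
theorem stmt_11 (N : ℝ) (hN : 0 < N) (ι : Type*) (P n : ι → ℝ × ℝ × ℝ)
    (hn : ∀ i, n i ≠ 0 ∧ |(n i).2.1| =
      Real.sqrt ((n i).1 ^ 2 + (n i).2.1 ^ 2 + (n i).2.2 ^ 2) / Real.sqrt 2)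
    (A : Set (ℝ × ℝ × ℝ))
    (hA : A = ⋃ i, {q : ℝ × ℝ × ℝ |
      (q.1 - (P i).1) * (n i).1 + (q.2.1 - (P i).2.1) * (n i).2.1 +
        (q.2.2 - (P i).2.2) * (n i).2.2 = 0})
    (f : ℝ → ℝ → ℝ≥0∞)
    (hf : ∀ δ h, f δ h = volume {p : ℝ × ℝ |
      (p.1, h, p.2) ∈ A + (Set.Ioo (-δ) δ) ×ˢ ({0} : Set ℝ) ×ˢ Set.Ioo (-δ) δ ∧
      p.1 ∈ Set.Icc (-N) N ∧ p.2 ∈ Set.Icc (-N) N}) :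
    ∀ δ t h₁ h₂ : ℝ, 0 < δ → 0 < t → h₁ ∈ Set.Icc (0 : ℝ) 1 → h₂ ∈ Set.Icc (0 : ℝ) 1 →
      |h₁ - h₂| < t → f δ h₂ ≤ f (δ + t) h₁ := by
  intro δ t h₁ h₂ hδ ht hmem₁ hmem₂ hdist
  rw [hf, hf]
  apply measure_mono
  rintro ⟨x, z⟩ ⟨hmem, hx, hz⟩
  refine ⟨?_, hx, hz⟩
  rw [Set.mem_add] at hmem ⊢
  obtain ⟨a, ha, e, he, hae⟩ := hmem
  rw [hA, Set.mem_iUnion] at ha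
  obtain ⟨i, hi⟩ := ha
  obtain ⟨hn0, hn2⟩ := hn i
  set n₁ := (n i).1 with hn1d
  set n₂ := (n i).2.1 with hn2d
  set n₃ := (n i).2.2 with hn3d
  have hsq : n₂ ^ 2 = n₁ ^ 2 + n₃ ^ 2 := by
    have h2 : |n₂| ^ 2 = (n₁ ^ 2 + n₂ ^ 2 + n₃ ^ 2) / 2 := by
      rw [hn2, div_pow, Real.sq_sqrt (by positivity), Real.sq_sqrt (by norm_num)]
    rw [sq_abs] at h2; linarith
  have hn2ne : n₂ ≠ 0 := by
    intro h
    apply hn0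
    have h1 : n₁ = 0 := by nlinarith [sq_nonneg n₁, sq_nonneg n₃]
    have h3 : n₃ = 0 := by nlinarith [sq_nonneg n₁, sq_nonneg n₃]
    rw [Prod.ext_iff, Prod.ext_iff]
    exact ⟨h1, h, h3⟩
  obtain ⟨a₁, a₂, a₃⟩ := a
  obtain ⟨e₁, e₂, e₃⟩ := e
  simp only [Set.mem_prod, Set.mem_Ioo, Set.mem_singleton_iff] at he
  obtain ⟨⟨he1l, he1r⟩, he2, he3l, he3r⟩ := he
  simp only [Prod.mk_add_mk, Prod.ext_iff] at hae
  obtain ⟨hax, hay, haz⟩ := hae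
  obtain ⟨Δ, hΔ⟩ : ∃ Δ, Δ = h₁ - h₂ := ⟨_, rfl⟩
  obtain ⟨u, hu⟩ : ∃ u, u = -Δ * n₁ / n₂ := ⟨_, rfl⟩
  obtain ⟨w, hw⟩ : ∃ w, w = -Δ * n₃ / n₂ := ⟨_, rfl⟩
  rw [← hΔ] at hdist
  have habs : |n₁| ≤ |n₂| ∧ |n₃| ≤ |n₂| := by
    constructor
    · rw [← Real.sqrt_sq_eq_abs, ← Real.sqrt_sq_eq_abs n₂]
      exact Real.sqrt_le_sqrt (by linarith [sq_nonneg n₃])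
    · rw [← Real.sqrt_sq_eq_abs, ← Real.sqrt_sq_eq_abs n₂]
      exact Real.sqrt_le_sqrt (by linarith [sq_nonneg n₁])
  have hub : |u| < t := by
    rw [hu, abs_div, abs_mul, abs_neg]
    rw [div_lt_iff₀ (abs_pos.mpr hn2ne)]
    calc |Δ| * |n₁| ≤ |Δ| * |n₂| := by
          exact mul_le_mul_of_nonneg_left habs.1 (abs_nonneg _)
      _ < t * |n₂| := by
          exact mul_lt_mul_of_pos_right hdist (abs_pos.mpr hn2ne)
  have hwb : |w| < t := by
    rw [hw, abs_div, abs_mul, abs_neg]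
    rw [div_lt_iff₀ (abs_pos.mpr hn2ne)]
    calc |Δ| * |n₃| ≤ |Δ| * |n₂| := by
          exact mul_le_mul_of_nonneg_left habs.2 (abs_nonneg _)
      _ < t * |n₂| := by
          exact mul_lt_mul_of_pos_right hdist (abs_pos.mpr hn2ne)
  refine ⟨(a₁ + u, a₂ + Δ, a₃ + w), ?_, (e₁ - u, 0, e₃ - w), ?_, ?_⟩
  · rw [hA, Set.mem_iUnion]
    refine ⟨i, ?_⟩
    simp only [Set.mem_setOf_eq, ← hn1d, ← hn2d, ← hn3d]
    have key : u * n₁ + Δ * n₂ + w * n₃ = 0 := by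
      rw [hu, hw]
      field_simp
      linear_combination Δ * hsq
    simp only [Set.mem_setOf_eq, ← hn1d, ← hn2d, ← hn3d] at hi
    linear_combination hi + key
  · simp only [Set.mem_prod, Set.mem_Ioo, Set.mem_singleton_iff]
    have hu' := abs_lt.mp hub
    have hw' := abs_lt.mp hwb
    exact ⟨⟨by linarith, by linarith⟩, trivial, by linarith, by linarith⟩
  · simp only [Prod.mk_add_mk, Prod.ext_iff]
    refine ⟨by linarith, by linarith, by linarith⟩
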